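/- arXiv:1606.00718 — 2 statements merged into one kernel-verified Lean document; each statement's English description precedes it below -/
import Mathlib

section
/- Let γ ≥ 1, let ν be a positive measure supported on [0,1], define B_z(ζ) = (1−conj(z)ζ)^{−γ}·∫₀¹ dν(r)/(1−r·conj(z)ζ) for z, ζ in the unit disc 𝔻, and let c > 1. Then |B_{z₀}(ζ) − B_z(ζ)| ≤ C·(|z−z₀|/|1−conj(ζ)z|)·|B_z(ζ)| for all z, z₀, ζ ∈ 𝔻 with |1−conj(ζ)z| ≥ c·|z−z₀|, where C = C(c,γ) = √2·(2+γ)·c^{γ+1}(3c+1)/(c−1)^{γ+2}. -/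
open MeasureTheory Complex Set Filter
open scoped ENNReal NNReal Real Classical

noncomputable section

/-- The open unit disc in `ℂ`. -/
def unitDisc : Set ℂ := Metric.ball 0 1

/-- The moment `ω_n = ∫₀¹ rⁿ dω(r)`. -/
def momNat (ω : Measure ℝ) (n : ℕ) : ℝ := ∫ r, r ^ n ∂ω

/-- The Bergman reproducing kernel `B^ω_z(ζ) = Σ (ζ conj z)ⁿ/(2 ω_{2n+1})`. -/
def bergmanKernel (ω : Measure ℝ) (z ζ : ℂ) : ℂ :=
  ∑' n : ℕ, (ζ * (starRingEnd ℂ) z) ^ n / (2 * (momNat ω (2 * n + 1) : ℂ))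

/-- The measure `ω⊗m` on the unit disc: `d(ω⊗m)(re^{iθ}) = r dω(r) dθ`. -/
def polarMeasure (ω : Measure ℝ) : Measure ℂ :=
  Measure.map (fun p : ℝ × ℝ => (p.1 : ℂ) * Complex.exp ((p.2 : ℂ) * Complex.I))
    ((ω.withDensity fun r => ENNReal.ofReal r).prod
      (volume.restrict (Set.Ico (0 : ℝ) (2 * Real.pi))))

/-- The class `D̂`: `ω̂(r) ≤ C ω̂((1+r)/2)`. -/
def DhatClass (ω : Measure ℝ) : Prop :=
  ∃ C : ℝ≥0, ∀ r : ℝ, 0 ≤ r → r < 1 →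
    ω (Set.Ico r 1) ≤ (C : ℝ≥0∞) * ω (Set.Ico ((1 + r) / 2) 1)

/-- The class `R` of regular measures on `[0,1)`. -/
def RClass (ω : Measure ℝ) : Prop :=
  ∃ C g b : ℝ, 0 < C ∧ 0 < g ∧ g ≤ b ∧
    ∀ r t : ℝ, 0 ≤ r → r ≤ t → t < 1 →
      ENNReal.ofReal (C⁻¹ * ((1 - r) / (1 - t)) ^ g) * ω (Set.Ico t 1) ≤ ω (Set.Ico r 1) ∧
      ω (Set.Ico r 1) ≤ ENNReal.ofReal (C * ((1 - r) / (1 - t)) ^ b) * ω (Set.Ico t 1)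

/-- `ω([a,b]) ≍ ω([a,(a+b)/2]) ≍ ω([(a+b)/2,b])`. -/
def Halving (ω : Measure ℝ) : Prop :=
  ∃ C : ℝ≥0, 0 < C ∧ ∀ a b : ℝ, 0 ≤ a → a ≤ b → b ≤ 1 →
    (ω (Set.Icc a b) ≤ (C : ℝ≥0∞) * ω (Set.Icc a ((a + b) / 2)) ∧
      ω (Set.Icc a ((a + b) / 2)) ≤ (C : ℝ≥0∞) * ω (Set.Icc a b)) ∧
    (ω (Set.Icc a b) ≤ (C : ℝ≥0∞) * ω (Set.Icc ((a + b) / 2) b) ∧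
      ω (Set.Icc ((a + b) / 2) b) ≤ (C : ℝ≥0∞) * ω (Set.Icc a b))

/-- The Carleson square over the arc of normalized length `h` starting at angle `θ₀`. -/
def carlesonSquare (θ₀ h : ℝ) : Set ℂ :=
  {z : ℂ | 1 - h ≤ ‖z‖ ∧ ‖z‖ < 1 ∧
    ∃ θ ∈ Set.Ico θ₀ (θ₀ + 2 * Real.pi * h),
      z = (‖z‖ : ℂ) * Complex.exp ((θ : ℂ) * Complex.I)}

/-- The top half of the Carleson square. -/
def carlesonTop (θ₀ h : ℝ) : Set ℂ :=
  {z : ℂ | 1 - h ≤ ‖z‖ ∧ ‖z‖ < 1 - h / 2 ∧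
    ∃ θ ∈ Set.Ico θ₀ (θ₀ + 2 * Real.pi * h),
      z = (‖z‖ : ℂ) * Complex.exp ((θ : ℂ) * Complex.I)}

/-- The Carleson square `S(I^β_{j,m})` over the dyadic arc `I^β_{j,m}`, of
normalized length `2/2^j`. -/
def dyadicSq (β : ℝ) (j m : ℕ) : Set ℂ :=
  carlesonSquare (4 * Real.pi * ((m : ℝ) + β) / 2 ^ j) (2 / 2 ^ j)

/-- The top half `T(I^β_{j,m})`. -/
def dyadicTop (β : ℝ) (j m : ℕ) : Set ℂ :=
  carlesonTop (4 * Real.pi * ((m : ℝ) + β) / 2 ^ j) (2 / 2 ^ j)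

/-- The Bergman projection `P_ω`. -/
def bergmanProj (ω : Measure ℝ) (f : ℂ → ℂ) (z : ℂ) : ℂ :=
  ∫ ζ, f ζ * (starRingEnd ℂ) (bergmanKernel ω z ζ) ∂(polarMeasure ω)

/-- The maximal Bergman projection `P⁺_ω`. -/
def bergmanProjPlus (ω : Measure ℝ) (f : ℂ → ℂ) (z : ℂ) : ℂ :=
  ∫ ζ, f ζ * (‖bergmanKernel ω z ζ‖ : ℂ) ∂(polarMeasure ω)

/-- `B^ω_z` admits the representation (*) with exponent `γ ≥ 1` and a positive
measure `ν` supported on `[0,1]`. -/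
def KernelRep (ω : Measure ℝ) (γ : ℝ) (ν : Measure ℝ) : Prop :=
  1 ≤ γ ∧ ν (Set.Icc (0 : ℝ) 1)ᶜ = 0 ∧
  ∀ z ∈ unitDisc, ∀ ζ ∈ unitDisc,
    bergmanKernel ω z ζ =
      (1 - (starRingEnd ℂ) z * ζ) ^ (-(γ : ℂ)) *
        ∫ r : ℝ, (1 - (r : ℂ) * ((starRingEnd ℂ) z * ζ))⁻¹ ∂ν

/-- The Bekollé–Bonami characteristic `B_{p,μ}(v)`, a supremum over all Carleson squares. -/
def BpConst (p : ℝ) (μ : Measure ℂ) (v : ℂ → ℝ) : ℝ≥0∞ :=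
  ⨆ (θ₀ : ℝ) (h : ℝ) (_ : 0 < h) (_ : h ≤ 1),
    ((∫⁻ z in carlesonSquare θ₀ h, ENNReal.ofReal (v z) ∂μ) / μ (carlesonSquare θ₀ h)) *
      ((∫⁻ z in carlesonSquare θ₀ h, ENNReal.ofReal (v z ^ (-(1 / (p - 1)))) ∂μ) /
          μ (carlesonSquare θ₀ h)) ^ (p - 1)

/-- An `ω`-weight: positive on the disc and `(ω⊗m)`-integrable. -/
def IsWeight (μ : Measure ℂ) (v : ℂ → ℝ) : Prop :=
  (∀ z ∈ unitDisc, 0 < v z) ∧ ∫⁻ z, ENNReal.ofReal (v z) ∂μ < ⊤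

/-- The weighted maximal function `M_ω`. -/
def maxFn (μ : Measure ℂ) (v : ℂ → ℝ) (z : ℂ) : ℝ≥0∞ :=
  ⨆ (a : ℂ) (r : ℝ) (_ : z ∈ Metric.ball a r),
    (∫⁻ ζ in Metric.ball a r ∩ unitDisc, ENNReal.ofReal (v ζ) ∂μ) /
      μ (Metric.ball a r ∩ unitDisc)

/-- The class `B_{1,ω}`: `M_ω(v) ≤ C v` almost everywhere. -/
def B1Class (μ : Measure ℂ) (v : ℂ → ℝ) : Prop :=
  ∃ C : ℝ≥0, ∀ᵐ z ∂μ, maxFn μ v z ≤ (C : ℝ≥0∞) * ENNReal.ofReal (v z)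

/-- The weighted `L^p` norm `(∫ |f|^p v dμ)^{1/p}`. -/
def lpNorm (μ : Measure ℂ) (p : ℝ) (v : ℂ → ℝ) (f : ℂ → ℂ) : ℝ≥0∞ :=
  (∫⁻ z, (‖f z‖₊ : ℝ≥0∞) ^ p * ENNReal.ofReal (v z) ∂μ) ^ (1 / p)

/-- `Ψ` is essentially decreasing on `(0,2)`. -/
def EssDecreasingOn (Ψ : ℝ → ℝ) : Prop :=
  ∃ C : ℝ, ∀ s t : ℝ, 0 < s → s ≤ t → t < 2 → Ψ t ≤ C * Ψ s

/-- The kernel `K_Ψ(z,ζ) = Ψ(|1 - conj ζ z|)/|1 - conj ζ z|`. -/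
def Kpsi (Ψ : ℝ → ℝ) (z ζ : ℂ) : ℝ :=
  Ψ (‖1 - (starRingEnd ℂ) ζ * z‖) / ‖1 - (starRingEnd ℂ) ζ * z‖

/-- The dyadic kernel `K^β_Ψ(z,ζ) = Σ_{I ∈ D^β} 1_{S(I)}(z) 1_{S(I)}(ζ) Ψ(|I|)/|I|`. -/
def KpsiDyadic (Ψ : ℝ → ℝ) (β : ℝ) (z ζ : ℂ) : ℝ :=
  ∑' jm : ℕ × ℕ,
    if jm.2 < 2 ^ jm.1 ∧ z ∈ dyadicSq β jm.1 jm.2 ∧ ζ ∈ dyadicSq β jm.1 jm.2 then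
      Ψ (2 / 2 ^ jm.1) / (2 / 2 ^ jm.1)
    else 0

/-- The dyadic weighted maximal function `M_{ν,D^β}`. -/
def dyadicMax (ν : Measure ℂ) (β : ℝ) (f : ℂ → ℂ) (z : ℂ) : ℝ≥0∞ :=
  ⨆ (jm : ℕ × ℕ) (_ : jm.2 < 2 ^ jm.1) (_ : z ∈ dyadicSq β jm.1 jm.2),
    (∫⁻ ζ in dyadicSq β jm.1 jm.2, (‖f ζ‖₊ : ℝ≥0∞) ∂ν) / ν (dyadicSq β jm.1 jm.2)

/-- The dyadic operator `P^β_{Ψ,μ}(f) = Σ_{I ∈ D^β} ⟨f, 1_{S(I)} Ψ(|I|)/|I|⟩_{L²_μ} 1_{S(I)}`. -/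
def dyadicOpPsi (μ : Measure ℂ) (ψ : ℝ → ℝ) (β : ℝ) (f : ℂ → ℂ) (z : ℂ) : ℂ :=
  ∑' jm : ℕ × ℕ,
    if jm.2 < 2 ^ jm.1 ∧ z ∈ dyadicSq β jm.1 jm.2 then
      ((ψ (2 / 2 ^ jm.1) / (2 / 2 ^ jm.1) : ℝ) : ℂ) * ∫ ζ in dyadicSq β jm.1 jm.2, f ζ ∂μ
    else 0

/-- The maximal operator `P⁺_{Ψ,μ}(f)(z) = ∫ |Ψ(1-conj ζ z)/(1-conj ζ z)| f(ζ) dμ(ζ)`. -/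
def PplusPsi (μ : Measure ℂ) (Ψ : ℂ → ℂ) (f : ℂ → ℂ) (z : ℂ) : ℂ :=
  ∫ ζ, ((‖Ψ (1 - (starRingEnd ℂ) ζ * z)‖ /
      ‖1 - (starRingEnd ℂ) ζ * z‖ : ℝ) : ℂ) * f ζ ∂μ

/-- Euclidean distance between two sets, as an `ℝ≥0∞`-valued infimum. -/
def setEDist (A B : Set ℂ) : ℝ≥0∞ := ⨅ a ∈ A, ⨅ b ∈ B, edist a b

/-- The polar rectangle `{re^{iθ} : r ∈ [r₁,r₂), θ ∈ [θ₁,θ₂)}`. -/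
def polarRect (r₁ r₂ θ₁ θ₂ : ℝ) : Set ℂ :=
  {z : ℂ | ∃ r θ : ℝ, r ∈ Set.Ico r₁ r₂ ∧ θ ∈ Set.Ico θ₁ θ₂ ∧
    z = (r : ℂ) * Complex.exp ((θ : ℂ) * Complex.I)}

/-- The generation-`k` dyadic polar subrectangle, with indices `i, l < 2^k`, of the
Carleson square over the half-circle starting at angle `θ₀`. -/
def dyadicPolarRect (θ₀ : ℝ) (k i l : ℕ) : Set ℂ :=
  polarRect (1 / 2 + (i : ℝ) / 2 ^ (k + 1)) (1 / 2 + ((i : ℝ) + 1) / 2 ^ (k + 1))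
    (θ₀ + (l : ℝ) * Real.pi / 2 ^ k) (θ₀ + ((l : ℝ) + 1) * Real.pi / 2 ^ k)

/-- The dyadic positive operator `T(f) = Σ_{I ∈ D^β} τ_{S(I)} (E^μ_{S(I)} f) 1_{S(I)}`. -/
def dyadicPosOp (μ : Measure ℂ) (β : ℝ) (τ : ℕ × ℕ → ℝ) (f : ℂ → ℂ) (z : ℂ) : ℂ :=
  ∑' jm : ℕ × ℕ,
    if jm.2 < 2 ^ jm.1 ∧ z ∈ dyadicSq β jm.1 jm.2 then
      ((τ jm / (μ (dyadicSq β jm.1 jm.2)).toReal : ℝ) : ℂ) *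
        ∫ ζ in dyadicSq β jm.1 jm.2, f ζ ∂μ
    else 0



set_option maxHeartbeats 2000000

lemma aux_lb {w : ℂ} (hw : norm w ≤ 1) {r : ℝ} (hr0 : 0 ≤ r) (hr1 : r ≤ 1) :
    norm (1 - w) / 2 ≤ norm (1 - (r : ℂ) * w) := by
  have h1 : norm (1 - w) ^ 2 = (1 - w.re) ^ 2 + w.im ^ 2 := by
    rw [Complex.sq_norm, Complex.normSq_apply]; simp; ring
  have h2 : norm (1 - (r : ℂ) * w) ^ 2 = (1 - r * w.re) ^ 2 + (r * w.im) ^ 2 := by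
    rw [Complex.sq_norm, Complex.normSq_apply]; simp; ring
  have hw2 : w.re ^ 2 + w.im ^ 2 ≤ 1 := by
    have := Complex.sq_norm w
    rw [Complex.normSq_apply] at this
    nlinarith [norm_nonneg w]
  have hu1 : w.re ≤ 1 := by nlinarith
  have hu2 : -1 ≤ w.re := by nlinarith
  have key : ((1 - w.re) ^ 2 + w.im ^ 2) / 4 ≤ (1 - r * w.re) ^ 2 + (r * w.im) ^ 2 := by
    rcases le_total r (1/2) with h | h
    · have hsq : (1 - w.re)/2 ≤ (1 - r * w.re) ^ 2 := by
        rcases le_total w.re 0 with h0 | h0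
        · have ht : 1 ≤ 1 - r * w.re := by nlinarith
          nlinarith [mul_le_mul ht ht (by norm_num) (by linarith)]
        · have h3 : r * w.re ≤ w.re / 2 := by nlinarith
          have ht : 1 - w.re/2 ≤ 1 - r * w.re := by linarith
          have ht0 : 0 ≤ 1 - w.re/2 := by linarith
          nlinarith [mul_le_mul ht ht ht0 (by linarith)]
      nlinarith [sq_nonneg (r * w.im), sq_nonneg w.im]
    · have ht : (1 - w.re)/2 ≤ 1 - r * w.re := by nlinarith
      have ht0 : 0 ≤ (1 - w.re)/2 := by linarith
      have hr2 : 1/4 ≤ r^2 := by nlinarith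
      have hv : w.im^2/4 ≤ r^2 * w.im^2 := by
        have := mul_le_mul_of_nonneg_right hr2 (sq_nonneg w.im)
        linarith
      nlinarith [mul_le_mul ht ht ht0 (by linarith)]
  have hnn : 0 ≤ norm (1 - (r:ℂ)*w) := norm_nonneg _
  nlinarith [norm_nonneg (1 - w)]

lemma aux_re {a : ℂ} (ha : 0 ≤ a.re) {x y : ℝ} (hx : 0 ≤ x) (hy : 0 ≤ y)
    (hs : (x:ℂ) + (y:ℂ)*a ≠ 0) :
    norm ((norm a : ℂ) + a) / Real.sqrt 2 * (norm ((x:ℂ) + (y:ℂ)*a))⁻¹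
      ≤ (((norm a : ℂ) + a) * (((x:ℂ) + (y:ℂ)*a)⁻¹)).re := by
  set A := norm a with hA
  set s : ℂ := (x:ℂ) + (y:ℂ)*a with hsdef
  set b : ℂ := (A:ℂ) + a with hbdef
  have hA2 : a.re^2 + a.im^2 = A^2 := by
    have := Complex.sq_norm a
    rw [Complex.normSq_apply] at this
    linear_combination -this
  have hAnn : 0 ≤ A := norm_nonneg a
  have hsre : s.re = x + y * a.re := by simp [hsdef]
  have hsim : s.im = y * a.im := by simp [hsdef]
  have hbre : b.re = A + a.re := by simp [hbdef]
  have hbim : b.im = a.im := by simp [hbdef]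
  have hns : Complex.normSq s = (norm s)^2 := (Complex.sq_norm s).symm
  have hre : (b * s⁻¹).re = ((A + a.re) * (x + y*A)) / (norm s)^2 := by
    have hK : (norm s)^2 ≠ 0 := pow_ne_zero _ ((norm_ne_zero_iff.mpr hs))
    rw [Complex.mul_re, Complex.inv_re, Complex.inv_im, hsre, hsim, hbre, hbim, hns]
    field_simp
    linear_combination y * hA2
  rw [hre]
  have hspos : 0 < norm s := norm_pos_iff.mpr hs
  have hsle : norm s ≤ x + y * A := by
    calc norm s ≤ norm (x:ℂ) + norm ((y:ℂ)*a) := norm_add_le _ _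
    _ = x + y * A := by rw [norm_mul]; simp [Complex.norm_real, Real.norm_eq_abs, _root_.abs_of_nonneg hx, _root_.abs_of_nonneg hy, ← hA]
  have hbn : 0 ≤ Real.sqrt 2 * (A + a.re) :=
    mul_nonneg (Real.sqrt_nonneg 2) (by linarith)
  have hble : norm b ≤ Real.sqrt 2 * (A + a.re) := by
    have hb2 : (norm b)^2 = 2*A*(A + a.re) := by
      rw [Complex.sq_norm, Complex.normSq_apply, hbre, hbim]
      nlinarith [hA2]
    have h2 : (Real.sqrt 2 * (A + a.re))^2 = 2 * (A+a.re)^2 := by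
      rw [mul_pow, Real.sq_sqrt (by norm_num : (0:ℝ) ≤ 2)]
    have hle2 : (norm b)^2 ≤ (Real.sqrt 2 * (A + a.re))^2 := by
      rw [hb2, h2]; nlinarith
    exact (pow_le_pow_iff_left₀ (norm_nonneg b) hbn two_ne_zero).mp hle2
  have key : norm b * norm s ≤ Real.sqrt 2 * ((A + a.re) * (x + y*A)) := by
    calc norm b * norm s ≤ (Real.sqrt 2 * (A + a.re)) * (x + y*A) :=
          mul_le_mul hble hsle (norm_nonneg s) hbn
    _ = _ := by ring
  have h2p : (0:ℝ) < Real.sqrt 2 := Real.sqrt_pos.mpr (by norm_num)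
  have heq : norm b / Real.sqrt 2 * (norm s)⁻¹
      = norm b / (Real.sqrt 2 * norm s) := by
    rw [← div_eq_mul_inv, div_div]
  rw [heq, div_le_div_iff₀ (by positivity) (pow_pos hspos 2)]
  nlinarith [mul_le_mul_of_nonneg_right key (norm_nonneg s)]

lemma aux_inv_le {X Y K : ℝ} (hX : 0 < X) (hY : 0 < Y) (h : X ≤ K * Y) :
    Y⁻¹ ≤ K * X⁻¹ := by
  have h1 : Y⁻¹ = (X/Y) * X⁻¹ := by field_simp
  have h2 : X/Y ≤ K := (div_le_iff₀ hY).mpr h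
  rw [h1]
  exact mul_le_mul_of_nonneg_right h2 (inv_nonneg.mpr hX.le)

/-- Lemma 3.5: pointwise derivative-type estimate
`|B_{z₀}(ζ) - B_z(ζ)| ≤ C (|z-z₀|/|1-conj ζ z|) |B_z(ζ)|` with the explicit constant
`C = √2 (2+γ) c^{γ+1}(3c+1)/(c-1)^{γ+2}`, valid whenever `|1-conj ζ z| ≥ c|z-z₀|`. -/
theorem kernel_difference_pointwise_estimate
    (γ : ℝ) (hγ : 1 ≤ γ) (ν : Measure ℝ) [IsFiniteMeasure ν]
    (hsupp : ν (Set.Icc (0 : ℝ) 1)ᶜ = 0) (c : ℝ) (hc : 1 < c)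
    (B : ℂ → ℂ → ℂ)
    (hB : ∀ z ζ : ℂ, B z ζ =
      (1 - (starRingEnd ℂ) z * ζ) ^ (-(γ : ℂ)) *
        ∫ r : ℝ, (1 - (r : ℂ) * ((starRingEnd ℂ) z * ζ))⁻¹ ∂ν) :
    ∀ z ∈ unitDisc, ∀ z₀ ∈ unitDisc, ∀ ζ ∈ unitDisc,
      c * dist z z₀ ≤ ‖1 - (starRingEnd ℂ) ζ * z‖ →
      ‖B z₀ ζ - B z ζ‖ ≤
        (Real.sqrt 2 * (2 + γ) * c ^ (γ + 1) * (3 * c + 1) / (c - 1) ^ (γ + 2)) *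
          (dist z z₀ / ‖1 - (starRingEnd ℂ) ζ * z‖) *
          ‖B z ζ‖ := by
  intro z hz z₀ hz₀ ζ hζ hdist
  have hcpos : (0:ℝ) < c := lt_trans one_pos hc
  have hz1 : norm z < 1 := by
    simpa [unitDisc] using mem_ball_zero_iff.mp hz
  have hz01 : norm z₀ < 1 := by
    simpa [unitDisc] using mem_ball_zero_iff.mp hz₀
  have hζ1 : norm ζ < 1 := by
    simpa [unitDisc] using mem_ball_zero_iff.mp hζ
  set w : ℂ := (starRingEnd ℂ) z * ζ with hw
  set w₀ : ℂ := (starRingEnd ℂ) z₀ * ζ with hw₀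
  set a : ℂ := 1 - w with ha
  set a₀ : ℂ := 1 - w₀ with ha₀
  set d : ℝ := dist z z₀ with hd
  set A : ℝ := norm a with hA
  have hd0 : 0 ≤ d := dist_nonneg
  have hwa : norm w < 1 := by
    rw [hw, norm_mul, Complex.norm_conj]
    nlinarith [norm_nonneg z, norm_nonneg ζ]
  have hw₀a : norm w₀ < 1 := by
    rw [hw₀, norm_mul, Complex.norm_conj]
    nlinarith [norm_nonneg z₀, norm_nonneg ζ]
  have habs_eq : norm (1 - (starRingEnd ℂ) ζ * z) = A := by
    have h1 : (1 - (starRingEnd ℂ) ζ * z) = (starRingEnd ℂ) a := by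
      rw [ha, hw, map_sub, map_one, map_mul, Complex.conj_conj]; ring
    rw [h1, hA, Complex.norm_conj]
  rw [habs_eq] at hdist ⊢
  have hdw : norm (w - w₀) ≤ d := by
    have h1 : w - w₀ = (starRingEnd ℂ) (z - z₀) * ζ := by
      rw [hw, hw₀, map_sub]; ring
    rw [h1, norm_mul, Complex.norm_conj, hd, Complex.dist_eq]
    nlinarith [norm_nonneg (z - z₀), norm_nonneg ζ]
  have hare : 0 < a.re := by
    have := Complex.abs_re_le_norm w
    have h2 : w.re ≤ norm w := (abs_le.mp this).2
    simp only [ha, Complex.sub_re, Complex.one_re]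
    linarith
  have ha₀re : 0 < a₀.re := by
    have := Complex.abs_re_le_norm w₀
    have h2 : w₀.re ≤ norm w₀ := (abs_le.mp this).2
    simp only [ha₀, Complex.sub_re, Complex.one_re]
    linarith
  have hApos : 0 < A := norm_pos_iff.mpr (fun h => by simp [h] at hare)
  have hdA : d ≤ A / c := by rw [le_div_iff₀ hcpos]; linarith
  have hAd : 0 < A - d := by
    have : A / c < A := by
      rw [div_lt_iff₀ hcpos]; nlinarith
    linarith
  have hAc : A * (c-1) / c ≤ A - d := by
    have he : A * (c-1) / c = A - A / c := by field_simp
    linarith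
  have hAcpos : 0 < A * (c-1) / c := div_pos (mul_pos hApos (by linarith)) hcpos
  have hA₀ : A - d ≤ norm a₀ := by
    have h1 : a - a₀ = w₀ - w := by rw [ha, ha₀]; ring
    have h2 : norm a ≤ norm a₀ + norm (a - a₀) := by
      calc norm a = norm (a₀ + (a - a₀)) := by ring_nf
      _ ≤ _ := norm_add_le _ _
    rw [h1] at h2
    have h3 : norm (w₀ - w) ≤ d := by rw [norm_sub_rev]; exact hdw
    rw [← hA] at h2
    linarith
  -- integrand functions
  set f : ℝ → ℂ := fun r => (1 - (r:ℂ) * w)⁻¹ with hf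
  set f₀ : ℝ → ℂ := fun r => (1 - (r:ℂ) * w₀)⁻¹ with hf₀
  set g : ℝ → ℝ := fun r => (norm (1 - (r:ℂ) * w))⁻¹ with hg
  have hae : ∀ᵐ r ∂ν, r ∈ Set.Icc (0:ℝ) 1 := by
    rw [MeasureTheory.ae_iff]
    exact hsupp
  -- kernel bounds
  have k1 : ∀ r ∈ Set.Icc (0:ℝ) 1, A / 2 ≤ norm (1 - (r:ℂ) * w) := by
    intro r hr
    exact aux_lb hwa.le hr.1 hr.2
  have k0 : ∀ r ∈ Set.Icc (0:ℝ) 1, A * (c-1) / (2*c) ≤ norm (1 - (r:ℂ) * w₀) := by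
    intro r hr
    have h1 := aux_lb hw₀a.le hr.1 hr.2
    rw [← ha₀] at h1
    have h4 : A * (c-1) / c ≤ norm a₀ := le_trans hAc hA₀
    have he2 : A * (c-1) / (2*c) = (A * (c-1) / c) / 2 := by ring
    linarith
  have hk1pos : ∀ r ∈ Set.Icc (0:ℝ) 1, (0:ℝ) < norm (1 - (r:ℂ) * w) :=
    fun r hr => lt_of_lt_of_le (by positivity) (k1 r hr)
  have hk0pos : ∀ r ∈ Set.Icc (0:ℝ) 1, (0:ℝ) < norm (1 - (r:ℂ) * w₀) :=
    fun r hr => lt_of_lt_of_le (div_pos (mul_pos hApos (by linarith)) (by linarith)) (k0 r hr)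
  -- measurability
  have hmf : Measurable f := by
    have : Measurable fun r : ℝ => 1 - (r:ℂ) * w :=
      measurable_const.sub (Complex.measurable_ofReal.mul_const w)
    exact this.inv
  have hmf₀ : Measurable f₀ := by
    have : Measurable fun r : ℝ => 1 - (r:ℂ) * w₀ :=
      measurable_const.sub (Complex.measurable_ofReal.mul_const w₀)
    exact this.inv
  have hmg : Measurable g := by
    have : Measurable fun r : ℝ => norm (1 - (r:ℂ) * w) :=
      (measurable_const.sub (Complex.measurable_ofReal.mul_const w)).norm
    exact this.inv
  -- integrability
  have hif : Integrable f ν := by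
    refine Integrable.mono' (integrable_const (2/A)) hmf.aestronglyMeasurable ?_
    filter_upwards [hae] with r hr
    rw [hf]
    simp only [norm_inv]
    have h3 : (norm (1 - (r:ℂ)*w))⁻¹ ≤ (A/2)⁻¹ :=
      inv_anti₀ (by positivity) (k1 r hr)
    rwa [inv_div] at h3
  have hif₀ : Integrable f₀ ν := by
    refine Integrable.mono' (integrable_const (2*c/(A*(c-1)))) hmf₀.aestronglyMeasurable ?_
    filter_upwards [hae] with r hr
    rw [hf₀]
    simp only [norm_inv]
    have h3 : (norm (1 - (r:ℂ)*w₀))⁻¹ ≤ (A*(c-1)/(2*c))⁻¹ :=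
      inv_anti₀ (div_pos (mul_pos hApos (by linarith)) (by linarith)) (k0 r hr)
    rwa [inv_div] at h3
  have hig : Integrable g ν := by
    refine Integrable.mono' (integrable_const (2/A)) hmg.aestronglyMeasurable ?_
    filter_upwards [hae] with r hr
    rw [Real.norm_eq_abs, hg]
    have h2 := hk1pos r hr
    rw [_root_.abs_of_nonneg (by positivity)]
    have h3 : (norm (1 - (r:ℂ)*w))⁻¹ ≤ (A/2)⁻¹ :=
      inv_anti₀ (by positivity) (k1 r hr)
    rwa [inv_div] at h3
  set I₁ : ℂ := ∫ r, f r ∂ν with hI₁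
  set I₀ : ℂ := ∫ r, f₀ r ∂ν with hI₀
  set J : ℝ := ∫ r, g r ∂ν with hJ
  have hJ0 : 0 ≤ J := integral_nonneg (fun r => by positivity)
  -- lower bound for |I₁| : J ≤ √2 |I₁|
  set b : ℂ := ((A:ℝ):ℂ) + a with hb
  have hbre : 0 < b.re := by
    have : b.re = A + a.re := by simp [hb]
    rw [this]; linarith
  have hbne : b ≠ 0 := fun h => by rw [h] at hbre; simp at hbre
  have hbpos : 0 < norm b := norm_pos_iff.mpr hbne
  have h2p : (0:ℝ) < Real.sqrt 2 := Real.sqrt_pos.mpr (by norm_num)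
  have hptw : ∀ᵐ r ∂ν, norm b / Real.sqrt 2 * g r ≤ (b * f r).re := by
    filter_upwards [hae] with r hr
    have heq : (((1-r : ℝ)):ℂ) + ((r : ℝ):ℂ) * a = 1 - (r:ℂ) * w := by
      rw [ha]; push_cast; ring
    have hsne : (((1-r : ℝ)):ℂ) + ((r : ℝ):ℂ) * a ≠ 0 := by
      rw [heq]
      intro h0
      have := hk1pos r hr
      rw [h0] at this; simp at this
    have h1 := aux_re hare.le (by linarith [hr.2] : (0:ℝ) ≤ 1 - r) hr.1 hsne
    rw [heq] at h1
    exact h1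
  have hIb : norm b / Real.sqrt 2 * J ≤ (b * I₁).re := by
    have h1 : ∫ r, (b * f r).re ∂ν = (b * I₁).re := by
      rw [hI₁, ← integral_const_mul b]
      simpa using integral_re (hif.const_mul b)
    calc norm b / Real.sqrt 2 * J
        = ∫ r, norm b / Real.sqrt 2 * g r ∂ν := by
          rw [hJ, integral_const_mul]
      _ ≤ ∫ r, (b * f r).re ∂ν := by
          refine integral_mono_ae (hig.const_mul _) ?_ hptw
          simpa using (hif.const_mul b).re
      _ = (b * I₁).re := h1
  have hJI : J ≤ Real.sqrt 2 * norm I₁ := by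
    have hre2 : (b * I₁).re ≤ norm b * norm I₁ := by
      calc (b * I₁).re ≤ norm (b * I₁) := Complex.re_le_norm _
      _ = _ := norm_mul _ _
    have h3 := le_trans hIb hre2
    rw [div_mul_eq_mul_div, div_le_iff₀ h2p] at h3
    nlinarith [h3, hbpos, h2p]
  -- bound |I₀ - I₁|
  have habsd : norm (I₀ - I₁) ≤ 2*c/((c-1)*A) * d * J := by
    have hsub : I₀ - I₁ = ∫ r, (f₀ r - f r) ∂ν := (integral_sub hif₀ hif).symm
    calc norm (I₀ - I₁) = ‖∫ r, (f₀ r - f r) ∂ν‖ := by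
          rw [hsub]
      _ ≤ ∫ r, ‖f₀ r - f r‖ ∂ν := norm_integral_le_integral_norm _
      _ ≤ ∫ r, (2*c/((c-1)*A) * d) * g r ∂ν := by
          refine integral_mono_ae (hif₀.sub hif).norm (hig.const_mul _) ?_
          filter_upwards [hae] with r hr
          have hu := hk1pos r hr
          have hv := hk0pos r hr
          have hune : (1 - (r:ℂ)*w) ≠ 0 := fun h0 => by rw [h0] at hu; simp at hu
          have hvne : (1 - (r:ℂ)*w₀) ≠ 0 := fun h0 => by rw [h0] at hv; simp at hv
          have hdiff : f₀ r - f r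
              = ((r:ℂ) * (w₀ - w)) * ((1 - (r:ℂ)*w₀)⁻¹ * (1 - (r:ℂ)*w)⁻¹) := by
            simp only [hf, hf₀]
            field_simp
            ring
          rw [hdiff, norm_mul, norm_mul, norm_mul, norm_inv, norm_inv]
          have hD : norm (w₀ - w) ≤ d := by
            rw [norm_sub_rev]; exact hdw
          have hYK : (norm (1 - (r:ℂ)*w₀))⁻¹ ≤ 2*c/((c-1)*A) := by
            have h5 : (norm (1 - (r:ℂ)*w₀))⁻¹ ≤ (A*(c-1)/(2*c))⁻¹ :=
              inv_anti₀ (div_pos (mul_pos hApos (by linarith)) (by linarith)) (k0 r hr)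
            rwa [inv_div, show (2:ℝ)*c/(A*(c-1)) = 2*c/((c-1)*A) by ring] at h5
          have habsr : norm ((r:ℝ):ℂ) = r := by
            rw [Complex.norm_real, Real.norm_eq_abs, _root_.abs_of_nonneg hr.1]
          rw [habsr]
          have e1 : r * norm (w₀ - w) ≤ 1 * d :=
            mul_le_mul hr.2 hD (norm_nonneg _) zero_le_one
          have e2 : (norm (1 - (r:ℂ)*w₀))⁻¹ * (norm (1 - (r:ℂ)*w))⁻¹
              ≤ (2*c/((c-1)*A)) * (norm (1 - (r:ℂ)*w))⁻¹ :=
            mul_le_mul_of_nonneg_right hYK (inv_nonneg.mpr (norm_nonneg _))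
          calc r * norm (w₀ - w) * ((norm (1 - (r:ℂ)*w₀))⁻¹ * (norm (1 - (r:ℂ)*w))⁻¹)
              ≤ (1 * d) * ((2*c/((c-1)*A)) * (norm (1 - (r:ℂ)*w))⁻¹) := by
                refine mul_le_mul e1 e2 ?_ (by linarith)
                positivity
            _ = (2*c/((c-1)*A) * d) * g r := by rw [hg]; ring
      _ = 2*c/((c-1)*A) * d * J := by rw [hJ, integral_const_mul]
  -- bound |I₀|
  have hI0le : norm I₀ ≤ (c+1)/(c-1) * J := by
    calc norm I₀ = ‖I₀‖ := rfl
      _ ≤ ∫ r, ‖f₀ r‖ ∂ν := norm_integral_le_integral_norm _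
      _ ≤ ∫ r, ((c+1)/(c-1)) * g r ∂ν := by
          refine integral_mono_ae hif₀.norm (hig.const_mul _) ?_
          filter_upwards [hae] with r hr
          have hu := hk1pos r hr
          have hv := hk0pos r hr
          have hD : norm (w₀ - w) ≤ d := by
            rw [norm_sub_rev]; exact hdw
          have hXle : norm (1 - (r:ℂ)*w) ≤ norm (1 - (r:ℂ)*w₀) + d := by
            have hsplit2 : 1 - (r:ℂ)*w = (1 - (r:ℂ)*w₀) + (r:ℂ)*(w₀ - w) := by ring
            calc norm (1 - (r:ℂ)*w)
                ≤ norm (1 - (r:ℂ)*w₀) + norm ((r:ℂ)*(w₀-w)) := by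
                  rw [hsplit2]; exact norm_add_le _ _
              _ ≤ _ := by
                  rw [norm_mul, Complex.norm_real, Real.norm_eq_abs, _root_.abs_of_nonneg hr.1]
                  nlinarith [norm_nonneg (w₀ - w), hr.2, hr.1, hD]
          have hk0' : A*(c-1) ≤ norm (1 - (r:ℂ)*w₀) * (2*c) := by
            have := k0 r hr
            rw [div_le_iff₀ (by linarith : (0:ℝ) < 2*c)] at this
            linarith
          have hXY : norm (1 - (r:ℂ)*w) ≤ ((c+1)/(c-1)) * norm (1 - (r:ℂ)*w₀) := by
            rw [div_mul_eq_mul_div, le_div_iff₀ (by linarith : (0:ℝ) < c - 1)]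
            nlinarith [mul_le_mul_of_nonneg_right hXle (by nlinarith : (0:ℝ) ≤ (c-1)*c),
              mul_le_mul_of_nonneg_right hdist (by linarith : (0:ℝ) ≤ c - 1), hk0', hv, hcpos]
          have := aux_inv_le hu hv hXY
          rw [hf₀]
          simp only [norm_inv]
          exact this
      _ = (c+1)/(c-1) * J := by rw [hJ, integral_const_mul]
  -- mean value estimate for the power difference
  set gp : ℂ → ℂ := fun s => s ^ (-(γ:ℂ)) with hgp
  have hseg : ∀ s ∈ segment ℝ a a₀, 0 < s.re ∧ A - d ≤ norm s := by
    rintro s hs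
    obtain ⟨u, v, hu, hv, huv, rfl⟩ := hs
    have hD : norm (a₀ - a) ≤ d := by
      have he : a₀ - a = w - w₀ := by rw [ha, ha₀]; ring
      rw [he]; exact hdw
    constructor
    · have h1 : (u • a + v • a₀).re = u * a.re + v * a₀.re := by
        simp [Complex.real_smul, Complex.add_re, Complex.mul_re, Complex.ofReal_re,
          Complex.ofReal_im]
      rw [h1]
      have hm : 0 < min a.re a₀.re := lt_min hare ha₀re
      have h2 : u * min a.re a₀.re ≤ u * a.re := mul_le_mul_of_nonneg_left (min_le_left _ _) hu
      have h3 : v * min a.re a₀.re ≤ v * a₀.re := mul_le_mul_of_nonneg_left (min_le_right _ _) hv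
      nlinarith
    · have h1 : u • a + v • a₀ - a = v • (a₀ - a) := by
        have huu : u = 1 - v := by linarith
        rw [huu, Complex.real_smul, Complex.real_smul, Complex.real_smul]
        push_cast
        ring
      have h2 : norm (u • a + v • a₀ - a) ≤ d := by
        rw [h1, Complex.real_smul, norm_mul, Complex.norm_real, Real.norm_eq_abs, _root_.abs_of_nonneg hv]
        have hv1 : v ≤ 1 := by linarith
        nlinarith [norm_nonneg (a₀ - a)]
      have h4 : A ≤ norm (u • a + v • a₀) + norm (u • a + v • a₀ - a) := by
        have he : a = (u • a + v • a₀) - (u • a + v • a₀ - a) := by ring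
        calc A = norm ((u • a + v • a₀) - (u • a + v • a₀ - a)) := by rw [hA, ← he]
          _ ≤ _ := by
              exact norm_sub_le _ _
      linarith
  have hMVT : norm (gp a₀ - gp a) ≤ γ * (A - d) ^ (-γ-1) * d := by
    have hder : ∀ s ∈ segment ℝ a a₀,
        HasDerivWithinAt gp (-(γ:ℂ) * s ^ (-(γ:ℂ) - 1)) (segment ℝ a a₀) s := fun s hs =>
      ((Complex.hasStrictDerivAt_cpow_const (Or.inl (hseg s hs).1)).hasDerivAt).hasDerivWithinAt
    have hbd : ∀ s ∈ segment ℝ a a₀,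
        ‖-(γ:ℂ) * s ^ (-(γ:ℂ) - 1)‖ ≤ γ * (A-d) ^ (-γ-1) := by
      intro s hs
      rw [norm_mul, norm_neg, Complex.norm_real]
      have h1 : ‖s ^ (-(γ:ℂ) - 1)‖ = norm s ^ (-γ - 1) := by
        have he : (-(γ:ℂ) - 1) = ((-γ - 1 : ℝ) : ℂ) := by push_cast; ring
        rw [he, Complex.norm_cpow_real]
      rw [h1, Real.norm_eq_abs, _root_.abs_of_nonneg (by linarith : (0:ℝ) ≤ γ)]
      have h2 : norm s ^ (-γ-1) ≤ (A - d) ^ (-γ-1) :=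
        Real.rpow_le_rpow_of_nonpos hAd (hseg s hs).2 (by linarith)
      exact mul_le_mul_of_nonneg_left h2 (by linarith)
    have hm := Convex.norm_image_sub_le_of_norm_hasDerivWithin_le hder hbd
      (convex_segment a a₀) (left_mem_segment ℝ a a₀) (right_mem_segment ℝ a a₀)
    have hD : ‖a₀ - a‖ ≤ d := by
      have he : a₀ - a = w - w₀ := by rw [ha, ha₀]; ring
      rw [he]; exact hdw
    calc norm (gp a₀ - gp a) = ‖gp a₀ - gp a‖ := rfl
      _ ≤ γ * (A-d) ^ (-γ-1) * ‖a₀ - a‖ := hm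
      _ ≤ γ * (A-d) ^ (-γ-1) * d := by
          refine mul_le_mul_of_nonneg_left hD ?_
          have := Real.rpow_nonneg hAd.le (-γ-1)
          positivity
  -- identities and rpow algebra
  set Q : ℝ := c ^ (γ+1) with hQdef
  set Rm : ℝ := (c-1) ^ (γ+1) with hRdef
  have hQpos : 0 < Q := Real.rpow_pos_of_pos hcpos _
  have hRpos : 0 < Rm := Real.rpow_pos_of_pos (by linarith) _
  have hRQ : Rm ≤ Q := Real.rpow_le_rpow (by linarith) (by linarith) (by linarith)
  have hPA : 0 < A ^ (-γ) := Real.rpow_pos_of_pos hApos _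
  have e0 : (A - d) ^ (-γ-1) ≤ (A*(c-1)/c) ^ (-γ-1) :=
    Real.rpow_le_rpow_of_nonpos hAcpos hAc (by linarith)
  have e1 : (A*(c-1)/c) ^ (-γ-1) = Q/Rm * (A ^ (-γ) * A⁻¹) := by
    have hAe : A ^ (-γ-1 : ℝ) = A ^ (-γ) * A⁻¹ := by
      rw [show (-γ-1 : ℝ) = -γ + (-1) by ring, Real.rpow_add hApos, Real.rpow_neg_one]
    have hcc : (0:ℝ) ≤ (c-1)/c := by apply div_nonneg <;> linarith
    rw [show (A*(c-1)/c : ℝ) = A * ((c-1)/c) by ring,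
      Real.mul_rpow hApos.le hcc]
    rw [show (-γ-1 : ℝ) = -(γ+1) by ring] at hAe ⊢
    rw [Real.rpow_neg hcc,
      Real.div_rpow (by linarith : (0:ℝ) ≤ c-1) hcpos.le, inv_div, hAe, hQdef, hRdef]
    ring
  have e4 : (c-1) ^ (γ+2) = Rm * (c-1) := by
    rw [show (γ+2 : ℝ) = (γ+1) + 1 by ring, Real.rpow_add (by linarith), Real.rpow_one, hRdef]
  -- the kernels in terms of gp
  have hBz : B z ζ = gp a * I₁ := hB z ζ
  have hBz₀ : B z₀ ζ = gp a₀ * I₀ := hB z₀ ζ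
  have habsgp : norm (gp a) = A ^ (-γ) := by
    have he : (-(γ:ℂ)) = ((-γ : ℝ) : ℂ) := by push_cast; ring
    simp only [hgp]
    rw [he, Complex.norm_cpow_real, hA]
  rw [hBz₀, hBz]
  have habsB : norm (gp a * I₁) = A ^ (-γ) * norm I₁ := by
    rw [norm_mul, habsgp]
  rw [habsB]
  have hsplit : gp a₀ * I₀ - gp a * I₁ = (gp a₀ - gp a) * I₀ + gp a * (I₀ - I₁) := by ring
  rw [hsplit]
  have hI1n : 0 ≤ norm I₁ := norm_nonneg _
  -- the key bracket inequality
  have hbr : γ * (Q/Rm) * ((c+1)/(c-1)) + 2*c/(c-1) ≤ (2+γ)*Q*(3*c+1)/(Rm*(c-1)) := by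
    have hpos : 0 < Rm*(c-1) := mul_pos hRpos (by linarith)
    rw [le_div_iff₀ hpos]
    have he : (γ * (Q/Rm) * ((c+1)/(c-1)) + 2*c/(c-1)) * (Rm*(c-1)) = γ*Q*(c+1) + 2*c*Rm := by
      have h1 : (c-1 : ℝ) ≠ 0 := by linarith
      have h2 : Rm ≠ 0 := ne_of_gt hRpos
      field_simp
    rw [he]
    nlinarith [mul_le_mul_of_nonneg_left hRQ (by linarith : (0:ℝ) ≤ 2*c), hQpos,
      mul_pos hQpos hcpos, mul_nonneg (mul_nonneg hQpos.le hcpos.le) (by linarith : (0:ℝ) ≤ γ)]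
  -- nonnegativity helpers
  have hc1 : (0:ℝ) < c - 1 := by linarith
  have hKpos : 0 < (2+γ)*Q*(3*c+1)/(Rm*(c-1)) := by
    apply div_pos
    · exact mul_pos (mul_pos (by linarith : (0:ℝ) < 2+γ) hQpos) (by linarith : (0:ℝ) < 3*c+1)
    · exact mul_pos hRpos hc1
  have hcJ : 0 ≤ (c+1)/(c-1) * J :=
    mul_nonneg (div_nonneg (by linarith) hc1.le) hJ0
  have hrp : 0 ≤ (A-d) ^ (-γ-1) := Real.rpow_nonneg hAd.le _
  have hQR : 0 ≤ Q/Rm * (A ^ (-γ) * A⁻¹) := by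
    apply mul_nonneg (div_nonneg hQpos.le hRpos.le)
    exact mul_nonneg hPA.le (inv_nonneg.mpr hApos.le)
  have hPAinv : 0 ≤ A ^ (-γ) * A⁻¹ * d * J :=
    mul_nonneg (mul_nonneg (mul_nonneg hPA.le (inv_nonneg.mpr hApos.le)) hd0) hJ0
  calc norm ((gp a₀ - gp a) * I₀ + gp a * (I₀ - I₁))
      ≤ norm (gp a₀ - gp a) * norm I₀
          + norm (gp a) * norm (I₀ - I₁) := by
        refine le_trans (norm_add_le _ _) ?_
        rw [norm_mul, norm_mul]
    _ ≤ (γ * (A-d) ^ (-γ-1) * d) * ((c+1)/(c-1) * J)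
          + A ^ (-γ) * (2*c/((c-1)*A) * d * J) := by
        refine add_le_add (mul_le_mul hMVT hI0le (norm_nonneg _) ?_) ?_
        · have h0γ : (0:ℝ) ≤ γ := by linarith
          positivity
        · rw [habsgp]
          exact mul_le_mul_of_nonneg_left habsd hPA.le
    _ ≤ (γ * (Q/Rm * (A ^ (-γ) * A⁻¹)) * d) * ((c+1)/(c-1) * J)
          + A ^ (-γ) * (2*c/((c-1)*A) * d * J) := by
        have h5 : (A-d) ^ (-γ-1) ≤ Q/Rm * (A ^ (-γ) * A⁻¹) := by rw [← e1]; exact e0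
        refine add_le_add_left ?_ _
        refine mul_le_mul_of_nonneg_right ?_ hcJ
        refine mul_le_mul_of_nonneg_right ?_ hd0
        exact mul_le_mul_of_nonneg_left h5 (by linarith)
    _ = (γ * (Q/Rm) * ((c+1)/(c-1)) + 2*c/(c-1)) * (A ^ (-γ) * A⁻¹ * d * J) := by
        have h1 : (c-1 : ℝ) ≠ 0 := ne_of_gt hc1
        have h2 : Rm ≠ 0 := ne_of_gt hRpos
        have h3 : A ≠ 0 := ne_of_gt hApos
        field_simp
    _ ≤ ((2+γ)*Q*(3*c+1)/(Rm*(c-1))) * (A ^ (-γ) * A⁻¹ * d * J) :=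
        mul_le_mul_of_nonneg_right hbr hPAinv
    _ ≤ ((2+γ)*Q*(3*c+1)/(Rm*(c-1))) * (A ^ (-γ) * A⁻¹ * d * (Real.sqrt 2 * norm I₁)) := by
        refine mul_le_mul_of_nonneg_left ?_ hKpos.le
        refine mul_le_mul_of_nonneg_left hJI ?_
        exact mul_nonneg (mul_nonneg hPA.le (inv_nonneg.mpr hApos.le)) hd0
    _ = Real.sqrt 2 * (2+γ) * Q * (3*c+1) / (c-1) ^ (γ+2) * (d / A) * (A ^ (-γ) * norm I₁) := by
        rw [e4]
        have h1 : (c-1 : ℝ) ≠ 0 := ne_of_gt hc1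
        have h2 : Rm ≠ 0 := ne_of_gt hRpos
        have h3 : A ≠ 0 := ne_of_gt hApos
        field_simp

end
end

section
/- Let ν be a positive Borel measure supported on [0,1]. Then, with absolute implicit constants, |∫₀¹ dν(r)/(1−rz)| ≍ ∫₀¹ dν(r)/|1−rz| ≍ ∫₀¹ dν(r)/(1−r(1−|1−z|)) for all z in the unit disc 𝔻. -/
open MeasureTheory Complex Set Filter
open scoped ENNReal NNReal Real Classical

noncomputable section

lemma my_disc_ne_one {z : ℂ} (hz : ‖z‖ < 1) : z ≠ 1 := by
  rintro rfl; simp at hz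

lemma my_pt_pos {z : ℂ} (hz : ‖z‖ < 1) {r : ℝ} (h0 : 0 ≤ r) (h1 : r ≤ 1) :
    0 < ‖1 - (r : ℂ) * z‖ := by
  have h2 : ‖(r : ℂ) * z‖ < 1 := by
    rw [norm_mul, Complex.norm_real, Real.norm_eq_abs, _root_.abs_of_nonneg h0]
    calc r * ‖z‖ ≤ 1 * ‖z‖ :=
          mul_le_mul_of_nonneg_right h1 (norm_nonneg z)
      _ = ‖z‖ := one_mul _
      _ < 1 := hz
  have h3 := norm_sub_norm_le (1 : ℂ) ((r : ℂ) * z)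
  simp only [norm_one] at h3
  linarith

lemma my_pt_upper {z : ℂ} {r : ℝ} (h0 : 0 ≤ r) (h1 : r ≤ 1) :
    ‖1 - (r : ℂ) * z‖ ≤ 1 - r * (1 - ‖1 - z‖) := by
  have hw : (1 : ℂ) - (r : ℂ) * z = ((1 - r : ℝ) : ℂ) + (r : ℂ) * (1 - z) := by
    push_cast; ring
  calc ‖1 - (r : ℂ) * z‖
      ≤ ‖((1 - r : ℝ) : ℂ)‖ + ‖(r : ℂ) * (1 - z)‖ := by
        rw [hw]; exact norm_add_le _ _
    _ = (1 - r) + r * ‖1 - z‖ := by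
        rw [norm_mul, Complex.norm_real, Complex.norm_real, Real.norm_eq_abs, Real.norm_eq_abs]
        rw [_root_.abs_of_nonneg (by linarith : (0:ℝ) ≤ 1 - r), _root_.abs_of_nonneg h0]
    _ = 1 - r * (1 - ‖1 - z‖) := by ring

lemma my_pt_lower {z : ℂ} (hz : ‖z‖ < 1) {r : ℝ} (h0 : 0 ≤ r) (h1 : r ≤ 1) :
    1 - r * (1 - ‖1 - z‖) ≤ 2 * ‖1 - (r : ℂ) * z‖ := by
  have hre : z.re < 1 := lt_of_le_of_lt (Complex.re_le_norm z) hz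
  have h1z : ‖1 - z‖ ≤ (1 - z.re) + |z.im| := by
    have := Complex.norm_le_abs_re_add_abs_im (1 - z)
    simpa [Complex.sub_re, Complex.sub_im, _root_.abs_of_nonneg (by linarith : (0:ℝ) ≤ 1 - z.re)]
      using this
  have hre2 : (1 - (r : ℂ) * z).re = 1 - r * z.re := by
    simp [Complex.sub_re, Complex.mul_re]
  have him2 : |(1 - (r : ℂ) * z).im| = r * |z.im| := by
    simp [Complex.sub_im, Complex.mul_im, abs_mul, _root_.abs_of_nonneg h0]
  have hA : 1 - r * z.re ≤ ‖1 - (r : ℂ) * z‖ := by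
    rw [← hre2]; exact Complex.re_le_norm _
  have hB : r * |z.im| ≤ ‖1 - (r : ℂ) * z‖ := by
    rw [← him2]; exact Complex.abs_im_le_norm _
  nlinarith [h1z, hA, hB]

lemma my_lam_exists {z : ℂ} (hz : ‖z‖ < 1) :
    ∃ lam : ℂ, ‖lam‖ = 1 ∧ ∀ r : ℝ, 0 ≤ r → r ≤ 1 →
      (1 / 2) * (‖1 - (r : ℂ) * z‖)⁻¹ ≤ (lam * (1 - (r : ℂ) * z)⁻¹).re := by
  set t := ‖1 - z‖ with ht_def
  have hz1 : (1 : ℂ) - z ≠ 0 := sub_ne_zero.2 (my_disc_ne_one hz).symm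
  have ht : 0 < t := norm_pos_iff.2 hz1
  have htne : (t : ℂ) ≠ 0 := by exact_mod_cast ht.ne'
  set u : ℂ := (1 - z) / (t : ℂ) with hu_def
  have hu_abs : ‖u‖ = 1 := by
    rw [hu_def, norm_div, Complex.norm_real, Real.norm_eq_abs, abs_of_pos ht, ← ht_def, div_self ht.ne']
  have hre : z.re < 1 := lt_of_le_of_lt (Complex.re_le_norm z) hz
  have hu_re : 0 ≤ u.re := by
    rw [hu_def, Complex.div_ofReal_re]
    have : (1 - z).re = 1 - z.re := by simp [Complex.sub_re]
    rw [this]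
    exact div_nonneg (by linarith) ht.le
  have hs_pos : 0 < ‖1 + u‖ := by
    have : (1 + u).re = 1 + u.re := by simp [Complex.add_re]
    have h2 : 0 < (1 + u).re := by rw [this]; linarith
    apply norm_pos_iff.2
    intro hc; rw [hc] at h2; simp at h2
  set s := ‖1 + u‖ with hs_def
  have hsne : (s : ℂ) ≠ 0 := by exact_mod_cast hs_pos.ne'
  set lam : ℂ := (1 + u) / (s : ℂ) with hlam_def
  have hlam_abs : ‖lam‖ = 1 := by
    rw [hlam_def, norm_div, Complex.norm_real, Real.norm_eq_abs, abs_of_pos hs_pos, ← hs_def,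
      div_self hs_pos.ne']
  have hs_le : s ≤ 2 := by
    have h := norm_add_le (1 : ℂ) u
    rw [norm_one, hu_abs] at h
    linarith
  have hlam_re : 1 / 2 ≤ lam.re := by
    rw [hlam_def, Complex.div_ofReal_re]
    have h2 : (1 + u).re = 1 + u.re := by simp [Complex.add_re]
    rw [h2, le_div_iff₀ hs_pos]
    linarith
  have huconj : u * (starRingEnd ℂ) u = 1 := by
    rw [Complex.mul_conj]
    norm_cast
    rw [Complex.normSq_eq_norm_sq, hu_abs]; norm_num
  have hconj : lam * (starRingEnd ℂ) u = (starRingEnd ℂ) lam := by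
    have hc1 : (starRingEnd ℂ) lam = (1 + (starRingEnd ℂ) u) / (s : ℂ) := by
      rw [hlam_def, map_div₀, map_add, map_one, Complex.conj_ofReal]
    rw [hlam_def, hc1, div_mul_eq_mul_div]
    congr 1
    linear_combination huconj
  refine ⟨lam, hlam_abs, fun r h0 h1 => ?_⟩
  set w : ℂ := 1 - (r : ℂ) * z with hw_def
  have haw : 0 < ‖w‖ := my_pt_pos hz h0 h1
  have hw : w = ((1 - r : ℝ) : ℂ) + ((r * t : ℝ) : ℂ) * u := by
    rw [hw_def, hu_def]
    push_cast
    field_simp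
    ring
  have e2 : lam * (starRingEnd ℂ) w =
      ((1 - r : ℝ) : ℂ) * lam + ((r * t : ℝ) : ℂ) * (starRingEnd ℂ) lam := by
    rw [hw, map_add, map_mul, Complex.conj_ofReal, Complex.conj_ofReal, ← hconj]
    ring
  have e3 : (lam * (starRingEnd ℂ) w).re = ((1 - r) + r * t) * lam.re := by
    rw [e2]
    simp [Complex.add_re, Complex.mul_re, Complex.ofReal_re, Complex.ofReal_im,
      Complex.conj_re, Complex.conj_im]
    ring
  have e4 : (lam * w⁻¹).re = (lam * (starRingEnd ℂ) w).re * (Complex.normSq w)⁻¹ := by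
    rw [Complex.inv_def, ← mul_assoc]
    simp [Complex.mul_re, Complex.ofReal_re, Complex.ofReal_im]
  have hub : ‖w‖ ≤ (1 - r) + r * t := by
    have := my_pt_upper (z := z) h0 h1
    rw [← hw_def] at this
    linarith [this]
  have h5 : ‖w‖ * (1 / 2) ≤ ((1 - r) + r * t) * lam.re :=
    mul_le_mul hub hlam_re (by norm_num) (by nlinarith [ht.le])
  have hnsq : Complex.normSq w = (‖w‖) ^ 2 := Complex.normSq_eq_norm_sq w
  calc (1 / 2) * (‖w‖)⁻¹
      = (‖w‖ * (1 / 2)) * ((‖w‖) ^ 2)⁻¹ := by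
        field_simp
    _ ≤ (((1 - r) + r * t) * lam.re) * ((‖w‖) ^ 2)⁻¹ := by
        gcongr
    _ = (lam * w⁻¹).re := by rw [e4, e3, hnsq]

/-- Lemma 4.1: with absolute constants,
`|∫₀¹ dν(r)/(1-rz)| ≍ ∫₀¹ dν(r)/|1-rz| ≍ ∫₀¹ dν(r)/(1-r(1-|1-z|))` on the disc. -/
theorem nu_integral_three_way_comparison :
    ∃ C : ℝ, 0 < C ∧ ∀ ν : Measure ℝ, IsFiniteMeasure ν → ν (Set.Icc (0 : ℝ) 1)ᶜ = 0 →
      ∀ z ∈ unitDisc,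
        (‖∫ r : ℝ, (1 - (r : ℂ) * z)⁻¹ ∂ν‖ ≤
            C * ∫ r : ℝ, (‖1 - (r : ℂ) * z‖)⁻¹ ∂ν ∧
          (∫ r : ℝ, (‖1 - (r : ℂ) * z‖)⁻¹ ∂ν) ≤
            C * ‖∫ r : ℝ, (1 - (r : ℂ) * z)⁻¹ ∂ν‖) ∧
        ((∫ r : ℝ, (‖1 - (r : ℂ) * z‖)⁻¹ ∂ν) ≤
            C * ∫ r : ℝ, (1 - r * (1 - ‖1 - z‖))⁻¹ ∂ν ∧
          (∫ r : ℝ, (1 - r * (1 - ‖1 - z‖))⁻¹ ∂ν) ≤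
            C * ∫ r : ℝ, (‖1 - (r : ℂ) * z‖)⁻¹ ∂ν) := by
  refine ⟨4, by norm_num, fun ν hfin hsupp z hz => ?_⟩
  have hz' : ‖z‖ < 1 := by
    have := Metric.mem_ball.1 hz
    simpa [unitDisc, Complex.dist_eq] using this
  set t := ‖1 - z‖ with ht_def
  have hz1 : (1 : ℂ) - z ≠ 0 := sub_ne_zero.2 (my_disc_ne_one hz').symm
  have ht : 0 < t := norm_pos_iff.2 hz1
  have hae : ∀ᵐ r ∂ν, r ∈ Set.Icc (0 : ℝ) 1 := by
    rw [ae_iff]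
    exact hsupp
  set f : ℝ → ℂ := fun r => (1 - (r : ℂ) * z)⁻¹ with hf_def
  set g : ℝ → ℝ := fun r => (‖1 - (r : ℂ) * z‖)⁻¹ with hg_def
  set h : ℝ → ℝ := fun r => (1 - r * (1 - t))⁻¹ with hh_def
  have mcont : Continuous fun r : ℝ => (1 : ℂ) - (r : ℂ) * z := by continuity
  have mf : Measurable f := mcont.measurable.inv
  have mg : Measurable g := (continuous_norm.comp mcont).measurable.inv
  have mh : Measurable h :=
    ((by continuity : Continuous fun r : ℝ => 1 - r * (1 - t))).measurable.inv
  have hmin : 0 < min 1 t := lt_min one_pos ht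
  set M : ℝ := 2 * (min 1 t)⁻¹ with hM_def
  -- pointwise facts
  have hpt : ∀ r ∈ Set.Icc (0 : ℝ) 1,
      0 < ‖1 - (r : ℂ) * z‖ ∧
      ‖1 - (r : ℂ) * z‖ ≤ 1 - r * (1 - t) ∧
      1 - r * (1 - t) ≤ 2 * ‖1 - (r : ℂ) * z‖ ∧
      min 1 t ≤ 1 - r * (1 - t) := by
    rintro r ⟨h0, h1⟩
    have hpos := my_pt_pos hz' h0 h1
    have hup := my_pt_upper (z := z) h0 h1
    have hlow := my_pt_lower hz' h0 h1
    refine ⟨hpos, hup, hlow, ?_⟩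
    have m1 : min 1 t ≤ 1 := min_le_left _ _
    have m2 : min 1 t ≤ t := min_le_right _ _
    nlinarith
  have hgM : ∀ r ∈ Set.Icc (0 : ℝ) 1, g r ≤ M := by
    intro r hr
    obtain ⟨hpos, hup, hlow, hmle⟩ := hpt r hr
    have h2 : min 1 t / 2 ≤ ‖1 - (r : ℂ) * z‖ := by linarith
    have h3 : g r ≤ (min 1 t / 2)⁻¹ := by
      simp only [hg_def]
      gcongr
    calc g r ≤ (min 1 t / 2)⁻¹ := h3
      _ = M := by rw [hM_def]; field_simp
  have hhM : ∀ r ∈ Set.Icc (0 : ℝ) 1, h r ≤ M ∧ 0 < h r := by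
    intro r hr
    obtain ⟨hpos, hup, hlow, hmle⟩ := hpt r hr
    have hd : 0 < 1 - r * (1 - t) := lt_of_lt_of_le hpos hup
    constructor
    · have e1 : h r ≤ (min 1 t)⁻¹ := by
        simp only [hh_def]
        gcongr
      have e2 : (min 1 t)⁻¹ ≤ M := by
        rw [hM_def]
        nlinarith [inv_pos.2 hmin]
      linarith
    · rw [hh_def]; exact inv_pos.2 hd
  have hInt_g : Integrable g ν := by
    refine Integrable.mono' (integrable_const M) mg.aestronglyMeasurable ?_
    filter_upwards [hae] with r hr
    rw [Real.norm_eq_abs, _root_.abs_of_nonneg (by rw [hg_def]; positivity)]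
    exact hgM r hr
  have hInt_h : Integrable h ν := by
    refine Integrable.mono' (integrable_const M) mh.aestronglyMeasurable ?_
    filter_upwards [hae] with r hr
    rw [Real.norm_eq_abs, _root_.abs_of_nonneg (hhM r hr).2.le]
    exact (hhM r hr).1
  have hInt_f : Integrable f ν := by
    refine Integrable.mono' (integrable_const M) mf.aestronglyMeasurable ?_
    filter_upwards [hae] with r hr
    have : ‖f r‖ = g r := by rw [hf_def, hg_def, norm_inv]
    rw [this]
    exact hgM r hr
  have hg0 : 0 ≤ ∫ r, g r ∂ν := integral_nonneg fun r => by rw [hg_def]; positivity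
  have hh0 : 0 ≤ ∫ r, h r ∂ν := by
    refine integral_nonneg_of_ae ?_
    filter_upwards [hae] with r hr
    exact (hhM r hr).2.le
  have habs0 : 0 ≤ ‖∫ r, f r ∂ν‖ := norm_nonneg _
  -- (i)
  have hi : ‖∫ r, f r ∂ν‖ ≤ ∫ r, g r ∂ν := by
    calc ‖∫ r, f r ∂ν‖ ≤ ∫ r, ‖f r‖ ∂ν := norm_integral_le_integral_norm f
      _ = ∫ r, g r ∂ν := by
          congr 1
          funext r
          rw [hf_def, hg_def, norm_inv]
  -- (ii)
  obtain ⟨lam, hlam1, hlamkey⟩ := my_lam_exists hz'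
  have hIntlf : Integrable (fun r => lam * f r) ν := hInt_f.const_mul lam
  have hii : ∫ r, g r ∂ν ≤ 2 * ‖∫ r, f r ∂ν‖ := by
    have key_ae : ∀ᵐ r ∂ν, (1 / 2) * g r ≤ (lam * f r).re := by
      filter_upwards [hae] with r hr
      exact hlamkey r hr.1 hr.2
    have step1 : ∫ r, (1 / 2) * g r ∂ν ≤ ∫ r, (lam * f r).re ∂ν :=
      integral_mono_ae (hInt_g.const_mul (1 / 2)) hIntlf.re key_ae
    have step2 : ∫ r, (lam * f r).re ∂ν = (∫ r, lam * f r ∂ν).re := by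
      have e := Complex.reCLM.integral_comp_comm hIntlf
      simp only [Complex.reCLM_apply] at e
      exact e
    have step3 : (∫ r, lam * f r ∂ν).re ≤ ‖∫ r, f r ∂ν‖ := by
      calc (∫ r, lam * f r ∂ν).re ≤ ‖∫ r, lam * f r ∂ν‖ := Complex.re_le_norm _
        _ = ‖lam‖ * ‖∫ r, f r ∂ν‖ := by
            rw [integral_const_mul, norm_mul]
        _ = ‖∫ r, f r ∂ν‖ := by rw [hlam1, one_mul]
    rw [integral_const_mul] at step1
    linarith
  -- (iii)
  have hiii : ∫ r, g r ∂ν ≤ 2 * ∫ r, h r ∂ν := by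
    have key_ae : ∀ᵐ r ∂ν, g r ≤ 2 * h r := by
      filter_upwards [hae] with r hr
      obtain ⟨hpos, hup, hlow, hmle⟩ := hpt r hr
      have hd : 0 < 1 - r * (1 - t) := lt_of_lt_of_le hpos hup
      have h2 : (1 - r * (1 - t)) / 2 ≤ ‖1 - (r : ℂ) * z‖ := by linarith
      have h3 : g r ≤ ((1 - r * (1 - t)) / 2)⁻¹ := by
        simp only [hg_def]
        gcongr
      calc g r ≤ ((1 - r * (1 - t)) / 2)⁻¹ := h3
        _ = 2 * h r := by rw [hh_def]; field_simp
    have := integral_mono_ae hInt_g (hInt_h.const_mul 2) key_ae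
    rwa [integral_const_mul] at this
  -- (iv)
  have hiv : ∫ r, h r ∂ν ≤ ∫ r, g r ∂ν := by
    refine integral_mono_ae hInt_h hInt_g ?_
    filter_upwards [hae] with r hr
    obtain ⟨hpos, hup, hlow, hmle⟩ := hpt r hr
    simp only [hh_def, hg_def]
    gcongr
  exact ⟨⟨by linarith, by linarith⟩, by linarith, by linarith⟩

end
end
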